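/- Let p be an odd prime and α a positive integer. Then the sum over all units g of ℤ/p^αℤ whose multiplicative order equals φ(p^α) is congruent to μ(p-1)·φ(p^{α-1}) modulo p^α, where μ is the Möbius function and φ is Euler's totient function. -/

import Mathlib

open Finset

lemma lte_emult {p : ℕ} (hp : p.Prime) (hodd : p ≠ 2) {x : ℤ} (h1 : (p:ℤ) ∣ x - 1) (m : ℕ) :
    emultiplicity (p:ℤ) (x ^ m - 1) = emultiplicity (p:ℤ) (x - 1) + emultiplicity p m := by
  have hx : ¬ (p:ℤ) ∣ x := by
    intro h
    have h2 : (p:ℤ) ∣ 1 := by simpa using dvd_sub h h1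
    have h3 := Int.le_of_dvd one_pos h2
    have := hp.one_lt
    exact absurd h3 (by exact_mod_cast this.not_ge)
  have := Int.emultiplicity_pow_sub_pow hp (hp.odd_of_ne_two hodd) (by simpa using h1) hx m
  rw [one_pow] at this
  exact this


lemma zmod_pow_pow_card {p : ℕ} [Fact p.Prime] (a : ZMod p) (k : ℕ) : a ^ p ^ k = a := by
  induction k with
  | zero => simp
  | succ n ih => rw [pow_succ, pow_mul, ih, ZMod.pow_card]

lemma int_dvd_pow_iff {p : ℕ} (hp : p.Prime) (hodd : p ≠ 2) {x : ℤ} {k a : ℕ} (hk : k < a) :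
    (p:ℤ) ^ a ∣ x ^ p ^ k - 1 ↔ (p:ℤ) ^ (a - k) ∣ x - 1 := by
  haveI : Fact p.Prime := ⟨hp⟩
  rcases eq_or_ne x 1 with rfl | hx1
  · simp
  have hppk : emultiplicity p (p ^ k) = (k : ℕ∞) :=
    emultiplicity_pow_self hp.pos.ne' hp.prime.not_unit k
  constructor
  · intro h
    have hp1 : (p:ℤ) ∣ x - 1 := by
      have hpd : (p:ℤ) ∣ x ^ p ^ k - 1 :=
        dvd_trans (dvd_pow_self (p:ℤ) (by omega : a ≠ 0)) h
      have ha : ((x - 1 : ℤ) : ZMod p) = 0 := by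
        have h2 : ((x ^ p ^ k - 1 : ℤ) : ZMod p) = 0 :=
          (ZMod.intCast_zmod_eq_zero_iff_dvd _ _).2 (by exact_mod_cast hpd)
        push_cast at h2 ⊢
        rw [sub_eq_zero] at h2 ⊢
        rw [← zmod_pow_pow_card ((x : ℤ) : ZMod p) k, h2]
      exact_mod_cast (ZMod.intCast_zmod_eq_zero_iff_dvd _ _).1 ha
    have hle : (a : ℕ∞) ≤ emultiplicity (p:ℤ) (x - 1) + k := by
      have := le_emultiplicity_of_pow_dvd h
      rwa [lte_emult hp hodd hp1, hppk] at this
    apply pow_dvd_of_le_emultiplicity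
    have hcast : ((a - k : ℕ) : ℕ∞) = (a : ℕ∞) - (k : ℕ∞) := by
      simp [ENat.coe_sub]
    rw [hcast]
    exact tsub_le_iff_right.2 hle
  · intro h
    have hp1 : (p:ℤ) ∣ x - 1 :=
      dvd_trans (dvd_pow_self (p:ℤ) (Nat.sub_pos_of_lt hk).ne') h
    apply pow_dvd_of_le_emultiplicity
    rw [lte_emult hp hodd hp1 (p ^ k), hppk]
    calc (a : ℕ∞) = ((a - k : ℕ) : ℕ∞) + (k : ℕ∞) := by
          rw [← Nat.cast_add]; norm_cast; omega
      _ ≤ emultiplicity (p:ℤ) (x - 1) + k :=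
          add_le_add_left (le_emultiplicity_of_pow_dvd h) _

lemma int_dvd_of_pow_coprime {p : ℕ} (hp : p.Prime) (hodd : p ≠ 2) {x : ℤ} {m a : ℕ}
    (h1 : (p:ℤ) ∣ x - 1) (hm : ¬ p ∣ m) (h : (p:ℤ) ^ a ∣ x ^ m - 1) :
    (p:ℤ) ^ a ∣ x - 1 := by
  apply pow_dvd_of_le_emultiplicity
  have := le_emultiplicity_of_pow_dvd h
  rwa [lte_emult hp hodd h1, emultiplicity_eq_zero.2 hm, add_zero] at this

lemma pow_eq_one_iff_int {N : ℕ} [NeZero N] (x : ZMod N) (m : ℕ) :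
    x ^ m = 1 ↔ (N:ℤ) ∣ ((x.val : ℤ)) ^ m - 1 := by
  rw [← ZMod.intCast_zmod_eq_zero_iff_dvd]
  push_cast
  rw [sub_eq_zero, ZMod.natCast_val, ZMod.cast_id, eq_comm]

lemma castHom_eq_one_iff {N M : ℕ} [NeZero N] (h : M ∣ N) (x : ZMod N) :
    ZMod.castHom h (ZMod M) x = 1 ↔ (M:ℤ) ∣ (x.val : ℤ) - 1 := by
  rw [← ZMod.intCast_zmod_eq_zero_iff_dvd]
  push_cast
  rw [sub_eq_zero, ZMod.castHom_apply, ZMod.natCast_val, eq_comm]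

lemma zmod_sum_val {q : ℕ} [NeZero q] : ∑ t : ZMod q, t.val = q * (q - 1) / 2 := by
  rw [← Finset.sum_range_id q]
  exact Finset.sum_nbij' (fun t : ZMod q => t.val) (fun n => (n : ZMod q))
    (fun t _ => Finset.mem_range.2 (ZMod.val_lt t))
    (fun n _ => Finset.mem_univ _)
    (fun t _ => by simp [ZMod.natCast_val, ZMod.cast_id])
    (fun n hn => ZMod.val_cast_of_lt (Finset.mem_range.1 hn))
    (fun t _ => rfl)

open scoped Classical in
lemma sum_fiber {p a k : ℕ} (hp : p.Prime) (hodd : p ≠ 2) (hk : k < a) [NeZero (p ^ a)] :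
    ∑ x ∈ Finset.univ.filter (fun x : ZMod (p ^ a) =>
        ZMod.castHom (pow_dvd_pow p (Nat.sub_le a k)) (ZMod (p ^ (a - k))) x = 1), x
      = ((p ^ k : ℕ) : ZMod (p ^ a)) := by
  set N := p ^ a with hN
  set m := p ^ (a - k) with hm
  set q := p ^ k with hq
  haveI : NeZero q := ⟨pow_ne_zero k hp.pos.ne'⟩
  haveI : NeZero m := ⟨pow_ne_zero _ hp.pos.ne'⟩
  have hNmq : N = m * q := by rw [hN, hm, hq, ← pow_add, Nat.sub_add_cancel hk.le]
  have hm2 : 2 ≤ m := hp.two_le.trans (Nat.le_self_pow (by omega) p)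
  have hq1 : 1 ≤ q := Nat.one_le_iff_ne_zero.2 (pow_ne_zero k hp.pos.ne')
  have key : ∑ t : ZMod q, ((1 + m * t.val : ℕ) : ZMod N) =
      ∑ x ∈ Finset.univ.filter (fun x : ZMod N =>
        ZMod.castHom (pow_dvd_pow p (Nat.sub_le a k)) (ZMod m) x = 1), x := by
    refine Finset.sum_nbij' (fun t : ZMod q => ((1 + m * t.val : ℕ) : ZMod N))
      (fun x : ZMod N => (((x.val - 1) / m : ℕ) : ZMod q)) ?_ ?_ ?_ ?_ ?_
    · intro t _
      simp only [Finset.mem_filter, Finset.mem_univ, true_and]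
      rw [map_natCast]
      push_cast
      rw [ZMod.natCast_self]
      ring
    · intro x _; exact Finset.mem_univ _
    · intro t _
      have h1 : t.val < q := ZMod.val_lt t
      have h2 : m * (t.val + 1) ≤ m * q := Nat.mul_le_mul_left m (by omega)
      have h3 : m * (t.val + 1) = m * t.val + m := by ring
      have hlt : 1 + m * t.val < N := by rw [hNmq]; omega
      rw [ZMod.val_cast_of_lt hlt, Nat.add_sub_cancel_left,
        Nat.mul_div_cancel_left _ (by omega : 0 < m)]
      simp [ZMod.natCast_val, ZMod.cast_id]
    · intro x hx
      simp only [Finset.mem_filter, Finset.mem_univ, true_and] at hx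
      have hdvd : (m:ℤ) ∣ (x.val : ℤ) - 1 := (castHom_eq_one_iff _ x).1 hx
      have hv1 : 1 ≤ x.val := by
        by_contra h
        have hx0 : x.val = 0 := by omega
        rw [hx0] at hdvd
        norm_num at hdvd
        have := Int.le_of_dvd one_pos hdvd
        omega
      have hdvdn : m ∣ x.val - 1 := by
        have hcast : ((x.val - 1 : ℕ) : ℤ) = (x.val : ℤ) - 1 := by push_cast [hv1]; ring
        exact_mod_cast hcast ▸ hdvd
      have hlt : (x.val - 1) / m < q := by
        have hvlt : x.val - 1 < N := by have := ZMod.val_lt x; omega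
        have hNqm : N = q * m := by rw [hNmq]; ring
        rw [Nat.div_lt_iff_lt_mul (by omega : 0 < m)]
        omega
      rw [ZMod.val_cast_of_lt hlt, Nat.mul_div_cancel' hdvdn]
      have h5 : 1 + (x.val - 1) = x.val := by omega
      rw [h5]
      simp [ZMod.natCast_val, ZMod.cast_id]
    · intro t _; rfl
  obtain ⟨c, hc⟩ := (hp.odd_of_ne_two hodd).pow (n := k)
  rw [← hq] at hc
  have hsub : q * (q - 1) / 2 = q * c := by
    have h6 : q * (q - 1) = 2 * (q * c) := by
      have : q - 1 = 2 * c := by omega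
      rw [this]; ring
    rw [h6, Nat.mul_div_cancel_left _ (by norm_num)]
  have hnat : (∑ t : ZMod q, (1 + m * t.val)) = q + N * c := by
    rw [Finset.sum_add_distrib, Finset.sum_const, smul_eq_mul, mul_one, Finset.card_univ,
      ZMod.card, ← Finset.mul_sum, zmod_sum_val, hsub, hNmq]
    ring
  rw [← key, ← Nat.cast_sum, hnat, Nat.cast_add, Nat.cast_mul, ZMod.natCast_self, zero_mul,
    add_zero]

open scoped Classical in
lemma sum_pow_prime_pow {p a k : ℕ} (hp : p.Prime) (hodd : p ≠ 2) (hk : k < a) [NeZero (p ^ a)] :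
    ∑ x ∈ Finset.univ.filter (fun x : ZMod (p ^ a) => x ^ p ^ k = 1), x
      = ((p ^ k : ℕ) : ZMod (p ^ a)) := by
  rw [← sum_fiber hp hodd hk]
  refine Finset.sum_congr (Finset.filter_congr fun x _ => ?_) (fun _ _ => rfl)
  rw [pow_eq_one_iff_int, castHom_eq_one_iff, Nat.cast_pow, Nat.cast_pow]
  exact int_dvd_pow_iff hp hodd hk

lemma isUnit_of_castHom_ne_zero {p a : ℕ} (hp : p.Prime) (ha : 0 < a) [NeZero (p ^ a)]
    {y : ZMod (p ^ a)} (h : ZMod.castHom (dvd_pow_self p ha.ne') (ZMod p) y ≠ 0) :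
    IsUnit y := by
  haveI : NeZero p := ⟨hp.pos.ne'⟩
  have hy : ¬ p ∣ y.val := by
    intro hd
    apply h
    rw [ZMod.castHom_apply, ← ZMod.natCast_val]
    exact (ZMod.natCast_eq_zero_iff _ _).2 hd
  have hcop : y.val.Coprime (p ^ a) :=
    Nat.Coprime.pow_right a (Nat.coprime_comm.1 ((hp.coprime_iff_not_dvd).2 hy))
  have := (ZMod.isUnit_iff_coprime y.val (p ^ a)).2 hcop
  rwa [ZMod.natCast_val, ZMod.cast_id] at this

open scoped Classical in
lemma sum_units_pow {N : ℕ} [NeZero N] {m : ℕ} (hm : m ≠ 0) :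
    ∑ g ∈ Finset.univ.filter (fun g : (ZMod N)ˣ => g ^ m = 1), (g : ZMod N)
      = ∑ x ∈ Finset.univ.filter (fun x : ZMod N => x ^ m = 1), x := by
  refine Finset.sum_bij (fun g _ => (g : ZMod N)) ?_ ?_ ?_ (fun _ _ => rfl)
  · intro g hg
    simp only [Finset.mem_filter, Finset.mem_univ, true_and] at hg ⊢
    rw [← Units.val_pow_eq_pow_val, hg, Units.val_one]
  · intro g _ g' _ h
    exact Units.ext h
  · intro x hx
    simp only [Finset.mem_filter, Finset.mem_univ, true_and] at hx
    have hxu : IsUnit x := IsUnit.of_mul_eq_one (a := x) (x ^ (m - 1)) (by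
      rw [← pow_succ']
      have : m - 1 + 1 = m := Nat.succ_pred_eq_of_pos (Nat.pos_of_ne_zero hm)
      rw [this, hx])
    refine ⟨hxu.unit, ?_, hxu.unit_spec⟩
    simp only [Finset.mem_filter, Finset.mem_univ, true_and]
    ext
    rw [Units.val_pow_eq_pow_val, hxu.unit_spec, hx, Units.val_one]

open scoped Classical in
lemma sum_pow_eq_zero {p a b : ℕ} (hp : p.Prime) (hodd : p ≠ 2) (ha : 0 < a) [NeZero (p ^ a)]
    (hb0 : b ≠ 0) (he_dvd : (b / p ^ b.factorization p) ∣ p - 1)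
    (he1 : b / p ^ b.factorization p ≠ 1) :
    ∑ x ∈ Finset.univ.filter (fun x : ZMod (p ^ a) => x ^ b = 1), x = 0 := by
  haveI : Fact p.Prime := ⟨hp⟩
  haveI : NeZero p := ⟨hp.pos.ne'⟩
  set e := b / p ^ b.factorization p with he
  have hp3 : 3 ≤ p := by have := hp.two_le; omega
  have hpm1 : 1 ≤ p - 1 := by omega
  have hnpd : ¬ p ∣ p - 1 := fun h => by have := Nat.le_of_dvd (by omega) h; omega
  have he0 : e ≠ 0 := (Nat.ordCompl_pos p hb0).ne'
  obtain ⟨g, hg⟩ := IsCyclic.exists_generator (α := (ZMod p)ˣ)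
  have hcard : Fintype.card (ZMod p)ˣ = p - 1 := by
    rw [ZMod.card_units_eq_totient, Nat.totient_prime hp]
  have hordg : orderOf g = p - 1 := by
    rw [orderOf_eq_card_of_forall_mem_zpowers hg, Nat.card_eq_fintype_card, hcard]
  set u := g ^ ((p - 1) / e) with hu
  have hordu : orderOf u = e := by
    rw [hu, orderOf_pow, hordg, Nat.gcd_eq_right (Nat.div_dvd_of_dvd he_dvd),
      Nat.div_div_self he_dvd (by omega)]
  have hue : u ^ e = 1 := hordu ▸ pow_orderOf_eq_one u
  obtain ⟨w, hw⟩ := ZMod.unitsMap_surjective (dvd_pow_self p ha.ne') u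
  set x := w ^ (p ^ (a - 1)) with hx
  have hcastx : ZMod.castHom (dvd_pow_self p ha.ne') (ZMod p) (x : ZMod (p ^ a))
      = ((u ^ (p ^ (a - 1)) : (ZMod p)ˣ) : ZMod p) := by
    rw [← hw, ZMod.unitsMap_def, hx, Units.val_pow_eq_pow_val, map_pow,
      Units.val_pow_eq_pow_val, Units.coe_map, MonoidHom.coe_coe]
  have hcardU : Fintype.card (ZMod (p ^ a))ˣ = p ^ (a - 1) * (p - 1) := by
    rw [ZMod.card_units_eq_totient, Nat.totient_prime_pow hp ha]
  have hxe : x ^ e = 1 := by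
    set z := x ^ e with hz
    have hz1 : ZMod.castHom (dvd_pow_self p ha.ne') (ZMod p) ((z : (ZMod (p ^ a))ˣ) : ZMod (p ^ a)) = 1 := by
      have hzc : ((z : (ZMod (p ^ a))ˣ) : ZMod (p ^ a)) = ((x : (ZMod (p ^ a))ˣ) : ZMod (p ^ a)) ^ e := by
        rw [hz]; push_cast; rfl
      rw [hzc, map_pow, hcastx, ← Units.val_pow_eq_pow_val, ← pow_mul, mul_comm, pow_mul,
        hue, one_pow, Units.val_one]
    have hw1 : w ^ (p ^ (a - 1) * (p - 1)) = 1 := by rw [← hcardU]; exact pow_card_eq_one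
    have hz2 : z ^ (p - 1) = 1 := by
      have hexp : p ^ (a - 1) * (e * (p - 1)) = p ^ (a - 1) * (p - 1) * e := by ring
      rw [hz, hx, ← pow_mul, ← pow_mul, hexp, pow_mul, hw1, one_pow]
    have hint1 : (p : ℤ) ∣ (((z : ZMod (p ^ a)).val : ℤ)) - 1 :=
      (castHom_eq_one_iff (dvd_pow_self p ha.ne') _).1 hz1
    have hint2 : ((p : ℤ)) ^ a ∣ (((z : ZMod (p ^ a)).val : ℤ)) ^ (p - 1) - 1 := by
      have : ((z : ZMod (p ^ a))) ^ (p - 1) = 1 := by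
        rw [← Units.val_pow_eq_pow_val, hz2, Units.val_one]
      have h2 := (pow_eq_one_iff_int _ _).1 this
      rwa [Nat.cast_pow] at h2
    have hfin : ((p : ℤ)) ^ a ∣ (((z : ZMod (p ^ a)).val : ℤ)) - 1 :=
      int_dvd_of_pow_coprime hp hodd hint1 hnpd hint2
    have hzone : (z : ZMod (p ^ a)) = 1 := by
      have := (pow_eq_one_iff_int (z : ZMod (p ^ a)) 1).2 (by rwa [pow_one, Nat.cast_pow])
      rwa [pow_one] at this
    exact Units.ext hzone
  have hxb : x ^ b = 1 := by
    have hb : b = e * p ^ b.factorization p := by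
      rw [he, Nat.div_mul_cancel (Nat.ordProj_dvd b p)]
    rw [hb, pow_mul, hxe, one_pow]
  have hne : ZMod.castHom (dvd_pow_self p ha.ne') (ZMod p) ((x : (ZMod (p ^ a))ˣ) : ZMod (p ^ a)) ≠ 1 := by
    rw [hcastx]
    intro hcon
    have hu1 : u ^ (p ^ (a - 1)) = 1 := Units.ext (by rw [hcon, Units.val_one])
    have hd1 : e ∣ p ^ (a - 1) := hordu ▸ orderOf_dvd_of_pow_eq_one hu1
    have hcop : Nat.Coprime (p ^ (a - 1)) (p - 1) :=
      Nat.Coprime.pow_left _ ((hp.coprime_iff_not_dvd).2 hnpd)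
    have : e ∣ Nat.gcd (p ^ (a - 1)) (p - 1) := Nat.dvd_gcd hd1 he_dvd
    rw [hcop] at this
    exact he1 (Nat.eq_one_of_dvd_one this)
  set ξ : ZMod (p ^ a) := ((x : (ZMod (p ^ a))ˣ) : ZMod (p ^ a)) with hξ
  have hunit : IsUnit (ξ - 1) := by
    apply isUnit_of_castHom_ne_zero hp ha
    rw [map_sub, map_one, sub_ne_zero]
    exact hne
  have hmul : ξ * (∑ y ∈ Finset.univ.filter (fun y : ZMod (p ^ a) => y ^ b = 1), y)
      = ∑ y ∈ Finset.univ.filter (fun y : ZMod (p ^ a) => y ^ b = 1), y := by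
    rw [Finset.mul_sum]
    refine Finset.sum_bij (fun y _ => ξ * y) ?_ ?_ ?_ (fun _ _ => rfl)
    · intro y hy
      simp only [Finset.mem_filter, Finset.mem_univ, true_and] at hy ⊢
      rw [mul_pow, hy, mul_one, hξ, ← Units.val_pow_eq_pow_val, hxb, Units.val_one]
    · intro y _ y' _ h
      exact (Units.mul_right_inj x).1 h
    · intro y hy
      simp only [Finset.mem_filter, Finset.mem_univ, true_and] at hy
      refine ⟨((x⁻¹ : (ZMod (p ^ a))ˣ) : ZMod (p ^ a)) * y, ?_, ?_⟩
      · simp only [Finset.mem_filter, Finset.mem_univ, true_and]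
        rw [mul_pow, hy, mul_one, ← Units.val_pow_eq_pow_val, inv_pow, hxb, inv_one,
          Units.val_one]
      · rw [hξ, ← mul_assoc, Units.mul_inv, one_mul]
  have hzero : (ξ - 1) * (∑ y ∈ Finset.univ.filter (fun y : ZMod (p ^ a) => y ^ b = 1), y) = 0 := by
    rw [sub_mul, one_mul, hmul, sub_self]
  exact (hunit.mul_right_eq_zero).1 hzero


open Finset in
open scoped Classical in
/-- Cai: for an odd prime `p` and `α ≥ 1`, the sum of all primitive roots modulo `p^α`
(units of `ZMod (p^α)` of multiplicative order `φ(p^α)`) is `μ(p-1) · φ(p^(α-1))` in `ZMod (p^α)`. -/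
theorem sum_primitiveRoots_prime_pow (p α : ℕ) (hp : p.Prime) (hodd : p ≠ 2)
    (hα : 0 < α) :
    haveI : NeZero (p ^ α) := ⟨pow_ne_zero α hp.pos.ne'⟩
    ∑ g ∈ univ.filter (fun g : (ZMod (p ^ α))ˣ => orderOf g = Nat.totient (p ^ α)),
        (g : ZMod (p ^ α)) =
      ((ArithmeticFunction.moebius (p - 1) : ℤ) : ZMod (p ^ α)) *
        ((Nat.totient (p ^ (α - 1)) : ℕ) : ZMod (p ^ α)) := by
  haveI : NeZero (p ^ α) := ⟨pow_ne_zero α hp.pos.ne'⟩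
  haveI : Fact p.Prime := ⟨hp⟩
  have hp3 : 3 ≤ p := by have := hp.two_le; omega
  have hnpd : ¬ p ∣ p - 1 := fun h => by have := Nat.le_of_dvd (by omega) h; omega
  set n := Nat.totient (p ^ α) with hn
  have hn_pos : 0 < n := Nat.totient_pos.2 (pow_pos hp.pos α)
  have hnval : n = p ^ (α - 1) * (p - 1) := Nat.totient_prime_pow hp hα
  have hinv : ∀ m > 0, ∑ i ∈ m.divisors,
      (∑ gg ∈ univ.filter (fun gg : (ZMod (p ^ α))ˣ => orderOf gg = i), (gg : ZMod (p ^ α)))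
      = ∑ gg ∈ univ.filter (fun gg : (ZMod (p ^ α))ˣ => gg ^ m = 1), (gg : ZMod (p ^ α)) := by
    intro m hm
    have hmaps : ∀ gg ∈ univ.filter (fun gg : (ZMod (p ^ α))ˣ => gg ^ m = 1),
        orderOf gg ∈ m.divisors := by
      intro gg hgg
      simp only [mem_filter, mem_univ, true_and] at hgg
      exact Nat.mem_divisors.2 ⟨orderOf_dvd_of_pow_eq_one hgg, hm.ne'⟩
    rw [← Finset.sum_fiberwise_of_maps_to hmaps (fun gg : (ZMod (p ^ α))ˣ => (gg : ZMod (p ^ α)))]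
    refine Finset.sum_congr rfl fun d hd => Finset.sum_congr ?_ fun _ _ => rfl
    rw [Finset.filter_filter]
    refine Finset.filter_congr fun gg _ => ?_
    constructor
    · intro h
      refine ⟨?_, h⟩
      have hdm : orderOf gg ∣ m := by rw [h]; exact (Nat.mem_divisors.1 hd).1
      exact orderOf_dvd_iff_pow_eq_one.1 hdm
    · intro h; exact h.2
  have hmob := ArithmeticFunction.sum_eq_iff_sum_smul_moebius_eq.mp hinv n hn_pos
  rw [← hmob, Nat.sum_divisorsAntidiagonal'
    (f := fun a b => (ArithmeticFunction.moebius a : ℤ) •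
      (∑ gg ∈ univ.filter (fun gg : (ZMod (p ^ α))ˣ => gg ^ b = 1), (gg : ZMod (p ^ α))))]
  -- restrict to p-power divisors
  have hfact : n.factorization p = α - 1 := by
    rw [hnval, Nat.factorization_mul (pow_ne_zero _ hp.pos.ne') (by omega : p - 1 ≠ 0)]
    simp [hp.factorization_pow, Nat.factorization_eq_zero_of_not_dvd hnpd]
  have hordcn : n / p ^ n.factorization p = p - 1 := by
    rw [hfact, hnval, Nat.mul_div_cancel_left _ (pow_pos hp.pos _)]
  have hsub : (range α).image (p ^ ·) ⊆ n.divisors := by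
    intro d hd
    obtain ⟨k, hk, rfl⟩ := Finset.mem_image.1 hd
    rw [Finset.mem_range] at hk
    refine Nat.mem_divisors.2 ⟨?_, hn_pos.ne'⟩
    rw [hnval]
    exact Dvd.dvd.mul_right (pow_dvd_pow p (by omega)) _
  rw [← Finset.sum_subset hsub ?_]
  rotate_left
  · -- terms outside the image vanish
    intro d hd hnd
    obtain ⟨hdvd, -⟩ := Nat.mem_divisors.1 hd
    have hd0 : d ≠ 0 := (Nat.pos_of_mem_divisors hd).ne'
    have hec : (d / p ^ d.factorization p) ∣ p - 1 := by
      have := Nat.ordCompl_dvd_ordCompl_of_dvd (p := p) hdvd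
      rwa [hordcn] at this
    have he1 : d / p ^ d.factorization p ≠ 1 := by
      intro h1
      apply hnd
      have hdp : d = p ^ d.factorization p := by
        have := Nat.ordProj_mul_ordCompl_eq_self d p
        rw [h1, mul_one] at this
        exact this.symm
      have hk : d.factorization p < α := by
        have hdvd2 : p ^ d.factorization p ∣ n := hdp ▸ hdvd
        have := (Nat.Prime.pow_dvd_iff_le_factorization hp hn_pos.ne').1 hdvd2
        omega
      exact Finset.mem_image.2 ⟨d.factorization p, Finset.mem_range.2 hk, hdp.symm⟩
    rw [sum_units_pow hd0, sum_pow_eq_zero hp hodd hα hd0 hec he1, smul_zero]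
  rw [Finset.sum_image (fun k _ j _ h => Nat.pow_right_injective hp.two_le h)]
  have hterm : ∀ k ∈ range α,
      (ArithmeticFunction.moebius (n / p ^ k) : ℤ) •
        (∑ gg ∈ univ.filter (fun gg : (ZMod (p ^ α))ˣ => gg ^ p ^ k = 1), (gg : ZMod (p ^ α)))
      = (ArithmeticFunction.moebius (p ^ (α - 1 - k) * (p - 1)) : ℤ) •
        ((p ^ k : ℕ) : ZMod (p ^ α)) := by
    intro k hk
    rw [Finset.mem_range] at hk
    have hdiv : n / p ^ k = p ^ (α - 1 - k) * (p - 1) := by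
      rw [hnval]
      have : p ^ (α - 1) = p ^ k * p ^ (α - 1 - k) := by
        rw [← pow_add]; congr 1; omega
      rw [this, mul_assoc, Nat.mul_div_cancel_left _ (pow_pos hp.pos _)]
    rw [hdiv, sum_units_pow (pow_ne_zero k hp.pos.ne'), sum_pow_prime_pow hp hodd hk]
  rw [Finset.sum_congr rfl hterm]
  -- final evaluation of the k-sum
  rcases Nat.lt_or_ge α 2 with h1 | h2
  · -- α = 1
    have hα1 : α = 1 := by omega
    subst hα1
    rw [Finset.sum_range_one]
    norm_num [Nat.totient_one]
  · obtain ⟨β, hβ⟩ : ∃ β, α = β + 2 := ⟨α - 2, by omega⟩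
    subst hβ
    have hre : ∀ k, β + 2 - 1 - k = β + 1 - k := fun k => by omega
    have hre2 : β + 2 - 1 = β + 1 := by omega
    simp only [hre, hre2]
    rw [Finset.sum_range_succ, Finset.sum_range_succ]
    have hzero : ∀ k ∈ Finset.range β,
        (ArithmeticFunction.moebius (p ^ (β + 1 - k) * (p - 1)) : ℤ) •
          ((p ^ k : ℕ) : ZMod (p ^ (β + 2))) = 0 := by
      intro k hk
      rw [Finset.mem_range] at hk
      have hnsq : ¬ Squarefree (p ^ (β + 1 - k) * (p - 1)) := by
        intro hsq
        have hdd : p * p ∣ p ^ (β + 1 - k) * (p - 1) := by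
          refine Dvd.dvd.mul_right ?_ _
          have h4 : p * p = p ^ 2 := by ring
          rw [h4]
          exact pow_dvd_pow p (by omega)
        exact hp.prime.not_unit (hsq p hdd)
      rw [ArithmeticFunction.moebius_eq_zero_of_not_squarefree hnsq]
      simp
    rw [Finset.sum_eq_zero hzero, zero_add]
    have e1 : β + 1 - β = 1 := by omega
    have e2 : β + 1 - (β + 1) = 0 := by omega
    rw [e1, e2, pow_one, pow_zero, one_mul]
    have hcop : Nat.Coprime p (p - 1) := (hp.coprime_iff_not_dvd).2 hnpd
    have hmu : ArithmeticFunction.moebius (p * (p - 1))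
        = ArithmeticFunction.moebius p * ArithmeticFunction.moebius (p - 1) :=
      ArithmeticFunction.isMultiplicative_moebius.map_mul_of_coprime hcop
    rw [hmu, ArithmeticFunction.moebius_apply_prime hp,
      Nat.totient_prime_pow hp (Nat.succ_pos β)]
    rw [zsmul_eq_mul, zsmul_eq_mul]
    have hre3 : β + 1 - 1 = β := by omega
    rw [hre3]
    push_cast [Nat.cast_sub hp.one_lt.le]
    ring
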